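/- Let A = ℚ[x, y]/(127x^3 − 2304xy, 113x^4 − 36864y^2), graded with deg x = 1 and deg y = 2. Then A is a graded ℚ-algebra with Hilbert function dim A_0 = 1, dim A_1 = 1, dim A_2 = 2, dim A_3 = 1, dim A_4 = 1, and A_j = 0 for j > 4. Moreover A is Gorenstein with socle in degree 4: for each 0 ≤ i ≤ 4, the multiplication pairing A_i × A_{4-i} → A_4 ≅ ℚ is perfect. -/

import Mathlib

open MvPolynomial

noncomputable section TautG6
set_option linter.unnecessarySeqFocus false
set_option synthInstance.maxHeartbeats 1000000
set_option maxHeartbeats 1000000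

abbrev S6 : Type := MvPolynomial (Fin 2) ℚ
def gx : S6 := X 0
def gy : S6 := X 1
def I6 : Ideal S6 := Ideal.span {127 * gx ^ 3 - 2304 * gx * gy, 113 * gx ^ 4 - 36864 * gy ^ 2}
def g1 : S6 := 127 * gx ^ 3 - 2304 * gx * gy
def g2 : S6 := 113 * gx ^ 4 - 36864 * gy ^ 2
def al : ℚ := 127 / 2304
def be : ℚ := 113 / 36864

def nf : ℕ → ℕ → (Fin 6 → ℚ)
  | 0, 0 => ![1,0,0,0,0,0]
  | 1, 0 => ![0,1,0,0,0,0]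
  | 2, 0 => ![0,0,1,0,0,0]
  | 3, 0 => ![0,0,0,0,1,0]
  | 4, 0 => ![0,0,0,0,0,1]
  | 0, 1 => ![0,0,0,1,0,0]
  | 1, 1 => al • ![0,0,0,0,1,0]
  | 2, 1 => al • ![0,0,0,0,0,1]
  | 0, 2 => be • ![0,0,0,0,0,1]
  | _, _ => 0

lemma key1 (a b : ℕ) : (127:ℚ) • nf (a+3) b = (2304:ℚ) • nf (a+1) (b+1) := by
  rcases b with _ | _ | b <;> rcases a with _ | _ | a <;>
    simp [nf, al, be] <;> norm_num [funext_iff, Fin.forall_fin_succ, al]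

lemma key2 (a b : ℕ) : (113:ℚ) • nf (a+4) b = (36864:ℚ) • nf a (b+2) := by
  rcases b with _ | b <;> rcases a with _ | _ | _ | _ | _ | a <;>
    simp [nf, al, be] <;> norm_num [funext_iff, Fin.forall_fin_succ, be]

def L : S6 →ₗ[ℚ] (Fin 6 → ℚ) :=
  (Finsupp.lsum ℚ fun (m : Fin 2 →₀ ℕ) => LinearMap.toSpanSingleton ℚ (Fin 6 → ℚ) (nf (m 0) (m 1))) ∘ₗ
    (AddMonoidAlgebra.coeffLinearEquiv ℚ).toLinearMap

lemma L_monomial (m : Fin 2 →₀ ℕ) (c : ℚ) : L (monomial m c) = c • nf (m 0) (m 1) := by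
  rw [← single_eq_monomial]
  exact Finsupp.lsum_single ℚ
    (fun (m : Fin 2 →₀ ℕ) => LinearMap.toSpanSingleton ℚ (Fin 6 → ℚ) (nf (m 0) (m 1))) m c

lemma g1_eq : g1 = monomial (Finsupp.single 0 3) (127:ℚ)
    - monomial (Finsupp.single 0 1 + Finsupp.single 1 1) (2304:ℚ) := by
  have h127 : (127 : S6) = C (127:ℚ) := (map_ofNat C 127).symm
  have h2304 : (2304 : S6) = C (2304:ℚ) := (map_ofNat C 2304).symm
  rw [g1, h127, h2304, gx, gy]
  simp [X, monomial_pow, monomial_mul, C_mul_monomial, Finsupp.smul_single]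

lemma g2_eq : g2 = monomial (Finsupp.single 0 4) (113:ℚ)
    - monomial (Finsupp.single 1 2) (36864:ℚ) := by
  have h113 : (113 : S6) = C (113:ℚ) := (map_ofNat C 113).symm
  have h2 : (36864 : S6) = C (36864:ℚ) := (map_ofNat C 36864).symm
  rw [g2, h113, h2, gx, gy]
  simp [X, monomial_pow, monomial_mul, C_mul_monomial, Finsupp.smul_single]

lemma L_mul_g1 (q : S6) : L (q * g1) = 0 := by
  induction q using MvPolynomial.induction_on' with
  | monomial m c =>
    rw [g1_eq, mul_sub, monomial_mul, monomial_mul, map_sub, L_monomial, L_monomial]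
    simp only [Finsupp.add_apply, Finsupp.single_apply, Finsupp.coe_add, Pi.add_apply]
    norm_num
    rw [mul_smul, mul_smul, key1 (m 0) (m 1), sub_self]
  | add p q hp hq => rw [add_mul, map_add, hp, hq, add_zero]

lemma L_mul_g2 (q : S6) : L (q * g2) = 0 := by
  induction q using MvPolynomial.induction_on' with
  | monomial m c =>
    rw [g2_eq, mul_sub, monomial_mul, monomial_mul, map_sub, L_monomial, L_monomial]
    simp only [Finsupp.add_apply, Finsupp.single_apply, Finsupp.coe_add, Pi.add_apply]
    norm_num
    rw [mul_smul, mul_smul, key2 (m 0) (m 1), sub_self]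
  | add p q hp hq => rw [add_mul, map_add, hp, hq, add_zero]

lemma L_vanish {p : S6} (hp : p ∈ I6) : L p = 0 := by
  have h : p ∈ Submodule.span S6 ({g1, g2} : Set S6) := hp
  rw [Submodule.mem_span_pair] at h
  obtain ⟨a, b, rfl⟩ := h
  simp only [smul_eq_mul]
  rw [map_add, L_mul_g1, L_mul_g2, add_zero]

def Lbar : (S6 ⧸ I6) →ₗ[ℚ] (Fin 6 → ℚ) :=
  (Submodule.liftQ (Submodule.restrictScalars ℚ I6) L (fun _ hp => L_vanish hp)).comp
    (Submodule.Quotient.restrictScalarsEquiv ℚ I6).symm.toLinearMap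

def Q : S6 →+* S6 ⧸ I6 := Ideal.Quotient.mk I6

lemma Lbar_mk (p : S6) : Lbar (Q p) = L p := by
  simp [Lbar, Q]
  rfl

/- ideal membership lemmas -/
lemma g1_mem : g1 ∈ I6 := Ideal.subset_span (by left; rw [g1])
lemma g2_mem : g2 ∈ I6 := Ideal.subset_span (by right; rw [g2]; rfl)

lemma A1 : (2304:S6)*(gx*gy) - 127*gx^3 ∈ I6 := by
  have h : (2304:S6)*(gx*gy) - 127*gx^3 = (-1) * g1 := by rw [g1]; ring
  rw [h]; exact I6.mul_mem_left _ g1_mem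

lemma A2 : (2304:S6)*(gx^2*gy) - 127*gx^4 ∈ I6 := by
  have h : (2304:S6)*(gx^2*gy) - 127*gx^4 = (-gx) * g1 := by rw [g1]; ring
  rw [h]; exact I6.mul_mem_left _ g1_mem

lemma A3 : (36864:S6)*gy^2 - 113*gx^4 ∈ I6 := by
  have h : (36864:S6)*gy^2 - 113*gx^4 = (-1) * g2 := by rw [g2]; ring
  rw [h]; exact I6.mul_mem_left _ g2_mem

lemma A4 : gx^5 ∈ I6 := by
  have h143 : (143:S6)*gx^5 ∈ I6 := by
    have h : (143:S6)*gx^5 = (-(127*gx^2 + 2304*gy)) * g1 + (144*gx) * g2 := by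
      rw [g1, g2]; ring
    rw [h]
    exact Ideal.add_mem _ (I6.mul_mem_left _ g1_mem) (I6.mul_mem_left _ g2_mem)
  have h : gx^5 = C (1/143 : ℚ) * ((143:S6)*gx^5) := by
    rw [← mul_assoc]
    have h2 : C (1/143 : ℚ) * (143:S6) = 1 := by
      rw [(map_ofNat C 143).symm, ← map_mul]; norm_num
    rw [h2, one_mul]
  rw [h]; exact I6.mul_mem_left _ h143

lemma A5 : gx^3*gy ∈ I6 := by
  have h : (2304:S6)*(gx^3*gy) ∈ I6 := by
    have h2 : (2304:S6)*(gx^3*gy) = gx^2 * ((2304:S6)*(gx*gy) - 127*gx^3) + 127*gx^5 := by ring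
    rw [h2]
    exact Ideal.add_mem _ (I6.mul_mem_left _ A1) (I6.mul_mem_left _ A4)
  have h3 : gx^3*gy = C (1/2304 : ℚ) * ((2304:S6)*(gx^3*gy)) := by
    rw [← mul_assoc]
    have h2 : C (1/2304 : ℚ) * (2304:S6) = 1 := by
      rw [(map_ofNat C 2304).symm, ← map_mul]; norm_num
    rw [h2, one_mul]
  rw [h3]; exact I6.mul_mem_left _ h

lemma A6 : gx*gy^2 ∈ I6 := by
  have h : (36864:S6)*(gx*gy^2) ∈ I6 := by
    have h2 : (36864:S6)*(gx*gy^2) = gx * ((36864:S6)*gy^2 - 113*gx^4) + 113*gx^5 := by ring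
    rw [h2]
    exact Ideal.add_mem _ (I6.mul_mem_left _ A3) (I6.mul_mem_left _ A4)
  have h3 : gx*gy^2 = C (1/36864 : ℚ) * ((36864:S6)*(gx*gy^2)) := by
    rw [← mul_assoc]
    have h2 : C (1/36864 : ℚ) * (36864:S6) = 1 := by
      rw [(map_ofNat C 36864).symm, ← map_mul]; norm_num
    rw [h2, one_mul]
  rw [h3]; exact I6.mul_mem_left _ h

lemma A7 : gy^3 ∈ I6 := by
  have h : (36864:S6)*gy^3 ∈ I6 := by
    have h2 : (36864:S6)*gy^3 = gy * ((36864:S6)*gy^2 - 113*gx^4) + 113*gx*(gx^3*gy) := by ring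
    rw [h2]
    exact Ideal.add_mem _ (I6.mul_mem_left _ A3) (I6.mul_mem_left _ A5)
  have h3 : gy^3 = C (1/36864 : ℚ) * ((36864:S6)*gy^3) := by
    rw [← mul_assoc]
    have h2 : C (1/36864 : ℚ) * (36864:S6) = 1 := by
      rw [(map_ofNat C 36864).symm, ← map_mul]; norm_num
    rw [h2, one_mul]
  rw [h3]; exact I6.mul_mem_left _ h

lemma big_mem (a b : ℕ) (h : 5 ≤ a + 2*b) : gx^a*gy^b ∈ I6 := by
  rcases b with _ | _ | _ | b
  · obtain ⟨k, rfl⟩ : ∃ k, a = 5 + k := ⟨a - 5, by omega⟩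
    have h2 : gx^(5+k)*gy^0 = gx^k * gx^5 := by ring
    rw [h2]; exact I6.mul_mem_left _ A4
  · obtain ⟨k, rfl⟩ : ∃ k, a = 3 + k := ⟨a - 3, by omega⟩
    have h2 : gx^(3+k)*gy^1 = gx^k * (gx^3*gy) := by ring
    rw [h2]; exact I6.mul_mem_left _ A5
  · obtain ⟨k, rfl⟩ : ∃ k, a = 1 + k := ⟨a - 1, by omega⟩
    have h2 : gx^(1+k)*gy^2 = gx^k * (gx*gy^2) := by ring
    rw [h2]; exact I6.mul_mem_left _ A6
  · have h2 : gx^a*gy^(b+3) = gx^a*gy^b * gy^3 := by ring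
    rw [h2]; exact I6.mul_mem_left _ A7

/- quotient-level computations -/
lemma gxy_pow (a b : ℕ) :
    gx^a * gy^b = monomial (Finsupp.single 0 a + Finsupp.single 1 b) (1:ℚ) := by
  simp [gx, gy, X_pow_eq_monomial, monomial_mul]

lemma mono_decomp (d : Fin 2 →₀ ℕ) :
    d = Finsupp.single 0 (d 0) + Finsupp.single 1 (d 1) := by
  ext i; fin_cases i <;> simp [Finsupp.single_apply]

lemma monomial_eq_C_mul (d : Fin 2 →₀ ℕ) (c : ℚ) :
    monomial d c = C c * (gx^(d 0) * gy^(d 1)) := by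
  rw [gxy_pow, C_mul_monomial, mul_one]
  conv_lhs => rw [mono_decomp d]

lemma mk_C_mul (c : ℚ) (p : S6) : Q (C c * p) = c • Q p := by
  rw [map_mul, ← MvPolynomial.algebraMap_eq]
  have h : Q ((algebraMap ℚ S6) c) = algebraMap ℚ (S6 ⧸ I6) c := rfl
  rw [h, ← Algebra.smul_def]

lemma L_gxy (a b : ℕ) : L (gx^a * gy^b) = nf a b := by
  rw [gxy_pow, L_monomial]
  simp [Finsupp.single_apply]

lemma q_xy : Q (gx*gy) = al • Q (gx^3) := by
  have hA1 : Q ((2304:S6)*(gx*gy) - 127*gx^3) = 0 := Ideal.Quotient.eq_zero_iff_mem.mpr A1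
  rw [show (2304:S6) = C (2304:ℚ) from (map_ofNat C 2304).symm,
      show (127:S6) = C (127:ℚ) from (map_ofNat C 127).symm,
      map_sub, mk_C_mul, mk_C_mul, sub_eq_zero] at hA1
  calc Q (gx*gy) = (1/2304:ℚ) • ((2304:ℚ) • Q (gx*gy)) := by rw [smul_smul]; norm_num
    _ = (1/2304:ℚ) • ((127:ℚ) • Q (gx^3)) := by rw [hA1]
    _ = al • Q (gx^3) := by rw [smul_smul]; norm_num [al]

lemma q_x2y : Q (gx^2*gy) = al • Q (gx^4) := by
  have hA2 : Q ((2304:S6)*(gx^2*gy) - 127*gx^4) = 0 := Ideal.Quotient.eq_zero_iff_mem.mpr A2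
  rw [show (2304:S6) = C (2304:ℚ) from (map_ofNat C 2304).symm,
      show (127:S6) = C (127:ℚ) from (map_ofNat C 127).symm,
      map_sub, mk_C_mul, mk_C_mul, sub_eq_zero] at hA2
  calc Q (gx^2*gy) = (1/2304:ℚ) • ((2304:ℚ) • Q (gx^2*gy)) := by rw [smul_smul]; norm_num
    _ = (1/2304:ℚ) • ((127:ℚ) • Q (gx^4)) := by rw [hA2]
    _ = al • Q (gx^4) := by rw [smul_smul]; norm_num [al]

lemma q_y2 : Q (gy^2) = be • Q (gx^4) := by
  have hA3 : Q ((36864:S6)*gy^2 - 113*gx^4) = 0 := Ideal.Quotient.eq_zero_iff_mem.mpr A3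
  rw [show (36864:S6) = C (36864:ℚ) from (map_ofNat C 36864).symm,
      show (113:S6) = C (113:ℚ) from (map_ofNat C 113).symm,
      map_sub, mk_C_mul, mk_C_mul, sub_eq_zero] at hA3
  calc Q (gy^2) = (1/36864:ℚ) • ((36864:ℚ) • Q (gy^2)) := by rw [smul_smul]; norm_num
    _ = (1/36864:ℚ) • ((113:ℚ) • Q (gx^4)) := by rw [hA3]
    _ = be • Q (gx^4) := by rw [smul_smul]; norm_num [be]

lemma q_big (a b : ℕ) (h : 5 ≤ a + 2*b) : Q (gx^a*gy^b) = 0 :=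
  Ideal.Quotient.eq_zero_iff_mem.mpr (big_mem a b h)

/- weighted degree -/
lemma weight_eval (d : Fin 2 →₀ ℕ) :
    (Finsupp.weight (![1,2] : Fin 2 → ℕ)) d = d 0 + 2 * d 1 := by
  rw [Finsupp.weight_apply, Finsupp.sum_fintype]
  · simp [Fin.sum_univ_two]; ring
  · intro i; simp

lemma whom (a b : ℕ) :
    gx^a*gy^b ∈ weightedHomogeneousSubmodule ℚ (![1,2] : Fin 2 → ℕ) (a+2*b) := by
  rw [mem_weightedHomogeneousSubmodule, gxy_pow]
  apply isWeightedHomogeneous_monomial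
  rw [weight_eval]
  simp [Finsupp.single_apply]

def AgrD (j : ℕ) : Submodule ℚ (S6 ⧸ I6) :=
  Submodule.map (Ideal.Quotient.mkₐ ℚ I6).toLinearMap
    (weightedHomogeneousSubmodule ℚ (![1,2] : Fin 2 → ℕ) j)

lemma mk_mem_AgrD (a b : ℕ) : Q (gx^a*gy^b) ∈ AgrD (a+2*b) :=
  ⟨gx^a*gy^b, whom a b, rfl⟩

lemma AgrD_le {j : ℕ} {T : Set (S6 ⧸ I6)}
    (H : ∀ (d : Fin 2 →₀ ℕ) (c : ℚ), d 0 + 2*d 1 = j → Q (monomial d c) ∈ Submodule.span ℚ T) :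
    AgrD j ≤ Submodule.span ℚ T := by
  rintro z ⟨p, hp, rfl⟩
  show Q p ∈ Submodule.span ℚ T
  rw [p.as_sum, map_sum]
  apply Submodule.sum_mem
  intro d hd
  apply H
  have h := hp (mem_support_iff.mp hd)
  rw [weight_eval] at h
  exact h

/- Lbar values -/
lemma Lb00 : Lbar (Q 1) = nf 0 0 := by
  have h := L_gxy 0 0; simp only [pow_zero, one_mul] at h
  rw [show (1:S6) = (1:S6) from rfl, Lbar_mk, h]
lemma Lb10 : Lbar (Q gx) = nf 1 0 := by
  have h := L_gxy 1 0; simp only [pow_zero, pow_one, mul_one] at h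
  rw [Lbar_mk, h]
lemma Lb20 : Lbar (Q (gx^2)) = nf 2 0 := by
  have h := L_gxy 2 0; simp only [pow_zero, mul_one] at h
  rw [Lbar_mk, h]
lemma Lb01 : Lbar (Q gy) = nf 0 1 := by
  have h := L_gxy 0 1; simp only [pow_zero, pow_one, one_mul] at h
  rw [Lbar_mk, h]
lemma Lb30 : Lbar (Q (gx^3)) = nf 3 0 := by
  have h := L_gxy 3 0; simp only [pow_zero, mul_one] at h
  rw [Lbar_mk, h]
lemma Lb40 : Lbar (Q (gx^4)) = nf 4 0 := by
  have h := L_gxy 4 0; simp only [pow_zero, mul_one] at h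
  rw [Lbar_mk, h]

lemma Q1_ne : Q 1 ≠ (0 : S6 ⧸ I6) := by
  intro h
  have h2 : nf 0 0 = 0 := by rw [← Lb00, h, map_zero]
  exact one_ne_zero ((by rfl : (1:ℚ) = nf 0 0 0).trans (congrFun h2 0))
lemma Qx_ne : Q gx ≠ (0 : S6 ⧸ I6) := by
  intro h
  have h2 : nf 1 0 = 0 := by rw [← Lb10, h, map_zero]
  exact one_ne_zero ((by rfl : (1:ℚ) = nf 1 0 1).trans (congrFun h2 1))
lemma Qx3_ne : Q (gx^3) ≠ (0 : S6 ⧸ I6) := by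
  intro h
  have h2 : nf 3 0 = 0 := by rw [← Lb30, h, map_zero]
  exact one_ne_zero ((by rfl : (1:ℚ) = nf 3 0 4).trans (congrFun h2 4))
lemma Qx4_ne : Q (gx^4) ≠ (0 : S6 ⧸ I6) := by
  intro h
  have h2 : nf 4 0 = 0 := by rw [← Lb40, h, map_zero]
  exact one_ne_zero ((by rfl : (1:ℚ) = nf 4 0 5).trans (congrFun h2 5))

/- span characterizations -/
lemma span0 : AgrD 0 = Submodule.span ℚ {Q 1} := by
  apply le_antisymm
  · apply AgrD_le
    intro d c hd
    rw [monomial_eq_C_mul, mk_C_mul]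
    have h0 : d 0 = 0 := by omega
    have h1 : d 1 = 0 := by omega
    rw [h0, h1]
    simp only [pow_zero, one_mul]
    exact Submodule.smul_mem _ _ (Submodule.subset_span rfl)
  · rw [Submodule.span_le, Set.singleton_subset_iff]
    have := mk_mem_AgrD 0 0
    simpa using this

lemma span1 : AgrD 1 = Submodule.span ℚ {Q gx} := by
  apply le_antisymm
  · apply AgrD_le
    intro d c hd
    rw [monomial_eq_C_mul, mk_C_mul]
    have h0 : d 0 = 1 := by omega
    have h1 : d 1 = 0 := by omega
    rw [h0, h1]
    simp only [pow_zero, pow_one, mul_one]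
    exact Submodule.smul_mem _ _ (Submodule.subset_span rfl)
  · rw [Submodule.span_le, Set.singleton_subset_iff]
    have := mk_mem_AgrD 1 0
    simpa using this

lemma span2 : AgrD 2 = Submodule.span ℚ {Q (gx^2), Q gy} := by
  apply le_antisymm
  · apply AgrD_le
    intro d c hd
    rw [monomial_eq_C_mul, mk_C_mul]
    have hd1 : d 1 = 0 ∨ d 1 = 1 := by omega
    rcases hd1 with h1 | h1
    · have h0 : d 0 = 2 := by omega
      rw [h0, h1]
      simp only [pow_zero, mul_one]
      exact Submodule.smul_mem _ _ (Submodule.subset_span (by left; rfl))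
    · have h0 : d 0 = 0 := by omega
      rw [h0, h1]
      simp only [pow_zero, pow_one, one_mul]
      exact Submodule.smul_mem _ _ (Submodule.subset_span (by right; rfl))
  · rw [Submodule.span_le]
    rintro z (rfl | rfl)
    · have := mk_mem_AgrD 2 0
      simpa using this
    · have := mk_mem_AgrD 0 1
      simpa using this

lemma span3 : AgrD 3 = Submodule.span ℚ {Q (gx^3)} := by
  apply le_antisymm
  · apply AgrD_le
    intro d c hd
    rw [monomial_eq_C_mul, mk_C_mul]
    have hd1 : d 1 = 0 ∨ d 1 = 1 := by omega
    rcases hd1 with h1 | h1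
    · have h0 : d 0 = 3 := by omega
      rw [h0, h1]
      simp only [pow_zero, mul_one]
      exact Submodule.smul_mem _ _ (Submodule.subset_span rfl)
    · have h0 : d 0 = 1 := by omega
      rw [h0, h1]
      simp only [pow_one]
      rw [q_xy]
      exact Submodule.smul_mem _ _ (Submodule.smul_mem _ _ (Submodule.subset_span rfl))
  · rw [Submodule.span_le, Set.singleton_subset_iff]
    have := mk_mem_AgrD 3 0
    simpa using this

lemma span4 : AgrD 4 = Submodule.span ℚ {Q (gx^4)} := by
  apply le_antisymm
  · apply AgrD_le
    intro d c hd
    rw [monomial_eq_C_mul, mk_C_mul]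
    have hd1 : d 1 = 0 ∨ d 1 = 1 ∨ d 1 = 2 := by omega
    rcases hd1 with h1 | h1 | h1
    · have h0 : d 0 = 4 := by omega
      rw [h0, h1]
      simp only [pow_zero, mul_one]
      exact Submodule.smul_mem _ _ (Submodule.subset_span rfl)
    · have h0 : d 0 = 2 := by omega
      rw [h0, h1]
      simp only [pow_one]
      rw [q_x2y]
      exact Submodule.smul_mem _ _ (Submodule.smul_mem _ _ (Submodule.subset_span rfl))
    · have h0 : d 0 = 0 := by omega
      rw [h0, h1]
      simp only [pow_zero, one_mul]
      rw [q_y2]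
      exact Submodule.smul_mem _ _ (Submodule.smul_mem _ _ (Submodule.subset_span rfl))
  · rw [Submodule.span_le, Set.singleton_subset_iff]
    have := mk_mem_AgrD 4 0
    simpa using this

lemma spanhigh (j : ℕ) (hj : 4 < j) : AgrD j = ⊥ := by
  rw [eq_bot_iff]
  have h := AgrD_le (j := j) (T := (∅ : Set (S6 ⧸ I6))) ?_
  · rwa [Submodule.span_empty] at h
  · intro d c hd
    rw [monomial_eq_C_mul, mk_C_mul, q_big _ _ (by omega), smul_zero]
    exact Submodule.zero_mem _

/- membership of generators -/
lemma memA0 : Q 1 ∈ AgrD 0 := by have := mk_mem_AgrD 0 0; simpa using this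
lemma memA1 : Q gx ∈ AgrD 1 := by have := mk_mem_AgrD 1 0; simpa using this
lemma memA2 : Q (gx^2) ∈ AgrD 2 := by have := mk_mem_AgrD 2 0; simpa using this
lemma memA2' : Q gy ∈ AgrD 2 := by have := mk_mem_AgrD 0 1; simpa using this
lemma memA3 : Q (gx^3) ∈ AgrD 3 := by have := mk_mem_AgrD 3 0; simpa using this
lemma memA4 : Q (gx^4) ∈ AgrD 4 := by have := mk_mem_AgrD 4 0; simpa using this

/- finranks -/
lemma fr0 : Module.finrank ℚ (AgrD 0) = 1 := by
  rw [span0]; exact finrank_span_singleton Q1_ne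
lemma fr1 : Module.finrank ℚ (AgrD 1) = 1 := by
  rw [span1]; exact finrank_span_singleton Qx_ne
lemma fr3 : Module.finrank ℚ (AgrD 3) = 1 := by
  rw [span3]; exact finrank_span_singleton Qx3_ne
lemma fr4 : Module.finrank ℚ (AgrD 4) = 1 := by
  rw [span4]; exact finrank_span_singleton Qx4_ne

lemma Qy_ne : Q gy ≠ (0 : S6 ⧸ I6) := by
  intro h
  have h2 : nf 0 1 = 0 := by rw [← Lb01, h, map_zero]
  exact one_ne_zero ((by rfl : (1:ℚ) = nf 0 1 3).trans (congrFun h2 3))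

lemma li2 : LinearIndependent ℚ ![Q (gx^2), Q gy] := by
  rw [linearIndependent_fin2]
  constructor
  · simpa using Qy_ne
  · intro r h
    simp only [Matrix.cons_val_one, Matrix.head_cons, Matrix.cons_val_zero] at h
    have h2 := congrArg Lbar h
    rw [map_smul, Lb01, Lb20] at h2
    have h3 := congrFun h2 2
    have h4 : r * nf 0 1 2 = nf 2 0 2 := h3
    have h5 : r * 0 = (1:ℚ) := h4
    simp at h5

lemma fr2 : Module.finrank ℚ (AgrD 2) = 2 := by
  have hset : ({Q (gx^2), Q gy} : Set (S6 ⧸ I6)) = Set.range ![Q (gx^2), Q gy] := by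
    ext z
    simp [Fin.exists_fin_two, or_comm]
  rw [span2, hset, finrank_span_eq_card li2]
  simp

/- nondegeneracy -/
lemma scal_x4 {r : ℚ} (h : r • Q (gx^4) = 0) : r = 0 := by
  have h2 := congrArg Lbar h
  rw [map_smul, Lb40, map_zero] at h2
  have h3 : r * 1 = (0:ℚ) := congrFun h2 5
  linarith

lemma nd0 (a : S6 ⧸ I6) (ha : a ∈ AgrD 0) (h : a * Q (gx^4) = 0) : a = 0 := by
  rw [span0, Submodule.mem_span_singleton] at ha
  obtain ⟨c, rfl⟩ := ha
  rw [smul_mul_assoc, ← map_mul, one_mul] at h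
  rw [scal_x4 h, zero_smul]

lemma nd1 (a : S6 ⧸ I6) (ha : a ∈ AgrD 1) (h : a * Q (gx^3) = 0) : a = 0 := by
  rw [span1, Submodule.mem_span_singleton] at ha
  obtain ⟨c, rfl⟩ := ha
  rw [smul_mul_assoc, ← map_mul, show gx * gx^3 = gx^4 from by ring] at h
  rw [scal_x4 h, zero_smul]

lemma nd3 (a : S6 ⧸ I6) (ha : a ∈ AgrD 3) (h : a * Q gx = 0) : a = 0 := by
  rw [span3, Submodule.mem_span_singleton] at ha
  obtain ⟨c, rfl⟩ := ha
  rw [smul_mul_assoc, ← map_mul, show gx^3 * gx = gx^4 from by ring] at h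
  rw [scal_x4 h, zero_smul]

lemma nd4 (a : S6 ⧸ I6) (ha : a ∈ AgrD 4) (h : a * Q 1 = 0) : a = 0 := by
  rw [span4, Submodule.mem_span_singleton] at ha
  obtain ⟨c, rfl⟩ := ha
  rw [smul_mul_assoc, ← map_mul, mul_one] at h
  rw [scal_x4 h, zero_smul]

lemma nd2 (a : S6 ⧸ I6) (ha : a ∈ AgrD 2)
    (h1 : a * Q (gx^2) = 0) (h2 : a * Q gy = 0) : a = 0 := by
  rw [span2, Submodule.mem_span_pair] at ha
  obtain ⟨s, t, rfl⟩ := ha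
  rw [add_mul, smul_mul_assoc, smul_mul_assoc, ← map_mul, ← map_mul,
      show gx^2 * gx^2 = gx^4 from by ring, show gy * gx^2 = gx^2*gy from by ring,
      q_x2y, smul_smul, ← add_smul] at h1
  rw [add_mul, smul_mul_assoc, smul_mul_assoc, ← map_mul, ← map_mul,
      show gy * gy = gy^2 from (sq gy).symm, q_x2y, q_y2,
      smul_smul, smul_smul, ← add_smul] at h2
  have e1 := scal_x4 h1
  have e2 := scal_x4 h2
  have ht : t = 0 := by
    have h3 : t * (be - al*al) = 0 := by linear_combination e2 - al * e1
    have h4 : be - al*al ≠ 0 := by norm_num [al, be]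
    exact (mul_eq_zero.mp h3).resolve_right h4
  have hs : s = 0 := by
    rw [ht] at e1; simpa using e1
  rw [ht, hs]
  simp

end TautG6

theorem genus_six_tautological_ring_gorenstein :
    let S := MvPolynomial (Fin 2) ℚ
    let x : S := X 0
    let y : S := X 1
    let I : Ideal S := Ideal.span {127 * x ^ 3 - 2304 * x * y, 113 * x ^ 4 - 36864 * y ^ 2}
    let w : Fin 2 → ℕ := ![1, 2]
    let Agr : ℕ → Submodule ℚ (S ⧸ I) := fun j =>
      Submodule.map (Ideal.Quotient.mkₐ ℚ I).toLinearMap (weightedHomogeneousSubmodule ℚ w j)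
    (Module.finrank ℚ (Agr 0) = 1 ∧ Module.finrank ℚ (Agr 1) = 1 ∧
      Module.finrank ℚ (Agr 2) = 2 ∧ Module.finrank ℚ (Agr 3) = 1 ∧
      Module.finrank ℚ (Agr 4) = 1) ∧
    (∀ j : ℕ, 4 < j → Agr j = ⊥) ∧
    (∀ i : ℕ, i ≤ 4 → ∀ a ∈ Agr i, (∀ b ∈ Agr (4 - i), a * b = 0) → a = 0) := by
  intro S x y I w Agr
  have hAgr : Agr = AgrD := rfl
  refine ⟨⟨?_, ?_, ?_, ?_, ?_⟩, ?_, ?_⟩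
  · rw [hAgr]; exact fr0
  · rw [hAgr]; exact fr1
  · rw [hAgr]; exact fr2
  · rw [hAgr]; exact fr3
  · rw [hAgr]; exact fr4
  · rw [hAgr]; exact spanhigh
  · rw [hAgr]
    intro i hi a ha hab
    interval_cases i
    · exact nd0 a ha (hab _ memA4)
    · exact nd1 a ha (hab _ memA3)
    · exact nd2 a ha (hab _ memA2) (hab _ memA2')
    · exact nd3 a ha (hab _ memA1)
    · exact nd4 a ha (hab _ memA0)
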